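/- arXiv:1710.10533 — 2 statements merged into one kernel-verified Lean document; each statement's English description precedes it below -/
import Mathlib

section
/- In the Clifford algebra Cl over ℂ of the quadratic form Q(u⊕v) = Σ_{i=1}^4 u_i v_i on ℂ⁴⊕ℂ⁴, with a_i = ι(e_i⊕0), a^i = ι(0⊕e_i), E^i_j := a^i a_j, ⟨E⟩ := Σ_{c=1}^4 E^c_c, S̄^i := (1/6) Σ ε^{iklm} a_k a_l a_m and S_j := (1/6) Σ ε_{jklm} a^k a^l a^m, the quadratic anticommutation relation S̄^i S_j + S_j S̄^i = E^i_j(⟨E⟩ − 2) + δ^i_j(−½⟨E⟩² + (3/2)⟨E⟩) − δ^i_j holds for all i,j ∈ {1,…,4}. -/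
open scoped BigOperators

/-- The bilinear form `B((u,v),(u',v')) = Σᵢ uᵢ v'ᵢ` on `ℂ⁴ ⊕ ℂ⁴`. -/
noncomputable def fermB : (Fin 4 → ℂ) × (Fin 4 → ℂ) →ₗ[ℂ]
    (Fin 4 → ℂ) × (Fin 4 → ℂ) →ₗ[ℂ] ℂ :=
  LinearMap.mk₂ ℂ (fun w w' => ∑ i : Fin 4, w.1 i * w'.2 i)
    (by intro m₁ m₂ n; simp [add_mul, Finset.sum_add_distrib])
    (by intro t m n; simp [Finset.mul_sum, mul_assoc])
    (by intro m n₁ n₂; simp [mul_add, Finset.sum_add_distrib])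
    (by intro t m n; simp [Finset.mul_sum, mul_left_comm])

/-- The quadratic form `Q(u ⊕ v) = Σᵢ uᵢ vᵢ` on `ℂ⁴ ⊕ ℂ⁴`. -/
noncomputable def fermQ : QuadraticForm ℂ ((Fin 4 → ℂ) × (Fin 4 → ℂ)) :=
  LinearMap.BilinMap.toQuadraticMap fermB

/-- The Clifford algebra of `fermQ`. -/
noncomputable abbrev Cl := CliffordAlgebra fermQ

/-- The fermionic annihilation operators `a_i = ι(e_i ⊕ 0)`. -/
noncomputable def aLow (i : Fin 4) : Cl :=
  CliffordAlgebra.ι fermQ (Pi.single i 1, 0)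

/-- The fermionic creation operators `a^i = ι(0 ⊕ e_i)`. -/
noncomputable def aUp (i : Fin 4) : Cl :=
  CliffordAlgebra.ι fermQ (0, Pi.single i 1)

/-- The even generators `E^i_j = a^i a_j` of the fermionic oscillator realization. -/
noncomputable def fermE (i j : Fin 4) : Cl := aUp i * aLow j

/-- The four-index Levi-Civita symbol: `ε(i,j,k,l)` is the sign of the permutation
`(0,1,2,3) ↦ (i,j,k,l)` when the indices are pairwise distinct, and `0` otherwise. -/
noncomputable def lc (i j k l : Fin 4) : ℂ :=
  ∑ σ : Equiv.Perm (Fin 4),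
    if σ 0 = i ∧ σ 1 = j ∧ σ 2 = k ∧ σ 3 = l then ((Equiv.Perm.sign σ : ℤ) : ℂ) else 0

/-- The odd generators `S̄^i = (1/6) Σ ε^{iklm} a_k a_l a_m`. -/
noncomputable def fermSbar (i : Fin 4) : Cl :=
  (1 / 6 : ℂ) • ∑ k : Fin 4, ∑ l : Fin 4, ∑ m : Fin 4,
    lc i k l m • (aLow k * aLow l * aLow m)

/-- The odd generators `S_j = (1/6) Σ ε_{jklm} a^k a^l a^m`. -/
noncomputable def fermS (j : Fin 4) : Cl :=
  (1 / 6 : ℂ) • ∑ k : Fin 4, ∑ l : Fin 4, ∑ m : Fin 4,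
    lc j k l m • (aUp k * aUp l * aUp m)

/-- The trace `⟨E⟩ = Σ_c E^c_c` of the fermionic oscillator realization. -/
noncomputable def fermTrE : Cl := ∑ c : Fin 4, fermE c c


lemma polar_ll (i j : Fin 4) :
    QuadraticMap.polar fermQ (Pi.single i 1, 0) (Pi.single j 1, 0) = 0 := by
  simp [QuadraticMap.polar, fermQ, fermB, LinearMap.BilinMap.toQuadraticMap_apply]

lemma polar_uu (i j : Fin 4) :
    QuadraticMap.polar fermQ (0, Pi.single i 1) (0, Pi.single j 1) = 0 := by
  simp [QuadraticMap.polar, fermQ, fermB, LinearMap.BilinMap.toQuadraticMap_apply]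

lemma polar_lu (i j : Fin 4) :
    QuadraticMap.polar fermQ (Pi.single i 1, 0) (0, Pi.single j 1)
      = if i = j then 1 else 0 := by
  by_cases h : i = j
  · simp [QuadraticMap.polar, fermQ, fermB, LinearMap.BilinMap.toQuadraticMap_apply,
      Pi.single_apply, h, Finset.sum_ite_eq]
  · have h' : ¬ j = i := fun hh => h hh.symm
    simp [QuadraticMap.polar, fermQ, fermB, LinearMap.BilinMap.toQuadraticMap_apply,
      Pi.single_apply, h, h', Finset.sum_ite_eq]

lemma low_low (i j : Fin 4) : aLow i * aLow j = -(aLow j * aLow i) := by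
  have h := CliffordAlgebra.ι_mul_ι_add_swap (Q := fermQ) (Pi.single i 1, 0) (Pi.single j 1, 0)
  rw [polar_ll, map_zero] at h
  rw [aLow, aLow, eq_neg_iff_add_eq_zero, h]

lemma up_up (i j : Fin 4) : aUp i * aUp j = -(aUp j * aUp i) := by
  have h := CliffordAlgebra.ι_mul_ι_add_swap (Q := fermQ) (0, Pi.single i 1) (0, Pi.single j 1)
  rw [polar_uu, map_zero] at h
  rw [aUp, aUp, eq_neg_iff_add_eq_zero, h]

lemma low_sq (i : Fin 4) : aLow i * aLow i = 0 := by
  rw [aLow, CliffordAlgebra.ι_sq_scalar]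
  simp [fermQ, fermB, LinearMap.BilinMap.toQuadraticMap_apply]
  exact (algebraMap ℂ Cl).map_zero

lemma up_sq (i : Fin 4) : aUp i * aUp i = 0 := by
  rw [aUp, CliffordAlgebra.ι_sq_scalar]
  simp [fermQ, fermB, LinearMap.BilinMap.toQuadraticMap_apply]
  exact (algebraMap ℂ Cl).map_zero

lemma low_up (i j : Fin 4) :
    aLow i * aUp j = (if i = j then (1:Cl) else 0) - aUp j * aLow i := by
  have h := CliffordAlgebra.ι_mul_ι_add_swap (Q := fermQ) (Pi.single i 1, 0) (0, Pi.single j 1)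
  rw [polar_lu] at h
  rw [aLow, aUp, eq_sub_iff_add_eq, h]
  split <;> simp

def lcInt (i j k l : Fin 4) : ℤ :=
  ∑ σ : Equiv.Perm (Fin 4),
    if σ 0 = i ∧ σ 1 = j ∧ σ 2 = k ∧ σ 3 = l then ((Equiv.Perm.sign σ : ℤ)) else 0

lemma lc_cast (i j k l : Fin 4) : lc i j k l = ((lcInt i j k l : ℤ) : ℂ) := by
  rw [lc, lcInt]
  push_cast [apply_ite (fun z : ℤ => (z : ℂ))]
  rfl

@[simp] lemma lcV0000 : lcInt 0 0 0 0 = 0 := by decide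
@[simp] lemma lcV0001 : lcInt 0 0 0 1 = 0 := by decide
@[simp] lemma lcV0002 : lcInt 0 0 0 2 = 0 := by decide
@[simp] lemma lcV0003 : lcInt 0 0 0 3 = 0 := by decide
@[simp] lemma lcV0010 : lcInt 0 0 1 0 = 0 := by decide
@[simp] lemma lcV0011 : lcInt 0 0 1 1 = 0 := by decide
@[simp] lemma lcV0012 : lcInt 0 0 1 2 = 0 := by decide
@[simp] lemma lcV0013 : lcInt 0 0 1 3 = 0 := by decide
@[simp] lemma lcV0020 : lcInt 0 0 2 0 = 0 := by decide
@[simp] lemma lcV0021 : lcInt 0 0 2 1 = 0 := by decide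
@[simp] lemma lcV0022 : lcInt 0 0 2 2 = 0 := by decide
@[simp] lemma lcV0023 : lcInt 0 0 2 3 = 0 := by decide
@[simp] lemma lcV0030 : lcInt 0 0 3 0 = 0 := by decide
@[simp] lemma lcV0031 : lcInt 0 0 3 1 = 0 := by decide
@[simp] lemma lcV0032 : lcInt 0 0 3 2 = 0 := by decide
@[simp] lemma lcV0033 : lcInt 0 0 3 3 = 0 := by decide
@[simp] lemma lcV0100 : lcInt 0 1 0 0 = 0 := by decide
@[simp] lemma lcV0101 : lcInt 0 1 0 1 = 0 := by decide
@[simp] lemma lcV0102 : lcInt 0 1 0 2 = 0 := by decide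
@[simp] lemma lcV0103 : lcInt 0 1 0 3 = 0 := by decide
@[simp] lemma lcV0110 : lcInt 0 1 1 0 = 0 := by decide
@[simp] lemma lcV0111 : lcInt 0 1 1 1 = 0 := by decide
@[simp] lemma lcV0112 : lcInt 0 1 1 2 = 0 := by decide
@[simp] lemma lcV0113 : lcInt 0 1 1 3 = 0 := by decide
@[simp] lemma lcV0120 : lcInt 0 1 2 0 = 0 := by decide
@[simp] lemma lcV0121 : lcInt 0 1 2 1 = 0 := by decide
@[simp] lemma lcV0122 : lcInt 0 1 2 2 = 0 := by decide
@[simp] lemma lcV0123 : lcInt 0 1 2 3 = 1 := by decide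
@[simp] lemma lcV0130 : lcInt 0 1 3 0 = 0 := by decide
@[simp] lemma lcV0131 : lcInt 0 1 3 1 = 0 := by decide
@[simp] lemma lcV0132 : lcInt 0 1 3 2 = -1 := by decide
@[simp] lemma lcV0133 : lcInt 0 1 3 3 = 0 := by decide
@[simp] lemma lcV0200 : lcInt 0 2 0 0 = 0 := by decide
@[simp] lemma lcV0201 : lcInt 0 2 0 1 = 0 := by decide
@[simp] lemma lcV0202 : lcInt 0 2 0 2 = 0 := by decide
@[simp] lemma lcV0203 : lcInt 0 2 0 3 = 0 := by decide
@[simp] lemma lcV0210 : lcInt 0 2 1 0 = 0 := by decide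
@[simp] lemma lcV0211 : lcInt 0 2 1 1 = 0 := by decide
@[simp] lemma lcV0212 : lcInt 0 2 1 2 = 0 := by decide
@[simp] lemma lcV0213 : lcInt 0 2 1 3 = -1 := by decide
@[simp] lemma lcV0220 : lcInt 0 2 2 0 = 0 := by decide
@[simp] lemma lcV0221 : lcInt 0 2 2 1 = 0 := by decide
@[simp] lemma lcV0222 : lcInt 0 2 2 2 = 0 := by decide
@[simp] lemma lcV0223 : lcInt 0 2 2 3 = 0 := by decide
@[simp] lemma lcV0230 : lcInt 0 2 3 0 = 0 := by decide
@[simp] lemma lcV0231 : lcInt 0 2 3 1 = 1 := by decide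
@[simp] lemma lcV0232 : lcInt 0 2 3 2 = 0 := by decide
@[simp] lemma lcV0233 : lcInt 0 2 3 3 = 0 := by decide
@[simp] lemma lcV0300 : lcInt 0 3 0 0 = 0 := by decide
@[simp] lemma lcV0301 : lcInt 0 3 0 1 = 0 := by decide
@[simp] lemma lcV0302 : lcInt 0 3 0 2 = 0 := by decide
@[simp] lemma lcV0303 : lcInt 0 3 0 3 = 0 := by decide
@[simp] lemma lcV0310 : lcInt 0 3 1 0 = 0 := by decide
@[simp] lemma lcV0311 : lcInt 0 3 1 1 = 0 := by decide
@[simp] lemma lcV0312 : lcInt 0 3 1 2 = 1 := by decide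
@[simp] lemma lcV0313 : lcInt 0 3 1 3 = 0 := by decide
@[simp] lemma lcV0320 : lcInt 0 3 2 0 = 0 := by decide
@[simp] lemma lcV0321 : lcInt 0 3 2 1 = -1 := by decide
@[simp] lemma lcV0322 : lcInt 0 3 2 2 = 0 := by decide
@[simp] lemma lcV0323 : lcInt 0 3 2 3 = 0 := by decide
@[simp] lemma lcV0330 : lcInt 0 3 3 0 = 0 := by decide
@[simp] lemma lcV0331 : lcInt 0 3 3 1 = 0 := by decide
@[simp] lemma lcV0332 : lcInt 0 3 3 2 = 0 := by decide
@[simp] lemma lcV0333 : lcInt 0 3 3 3 = 0 := by decide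
@[simp] lemma lcV1000 : lcInt 1 0 0 0 = 0 := by decide
@[simp] lemma lcV1001 : lcInt 1 0 0 1 = 0 := by decide
@[simp] lemma lcV1002 : lcInt 1 0 0 2 = 0 := by decide
@[simp] lemma lcV1003 : lcInt 1 0 0 3 = 0 := by decide
@[simp] lemma lcV1010 : lcInt 1 0 1 0 = 0 := by decide
@[simp] lemma lcV1011 : lcInt 1 0 1 1 = 0 := by decide
@[simp] lemma lcV1012 : lcInt 1 0 1 2 = 0 := by decide
@[simp] lemma lcV1013 : lcInt 1 0 1 3 = 0 := by decide
@[simp] lemma lcV1020 : lcInt 1 0 2 0 = 0 := by decide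
@[simp] lemma lcV1021 : lcInt 1 0 2 1 = 0 := by decide
@[simp] lemma lcV1022 : lcInt 1 0 2 2 = 0 := by decide
@[simp] lemma lcV1023 : lcInt 1 0 2 3 = -1 := by decide
@[simp] lemma lcV1030 : lcInt 1 0 3 0 = 0 := by decide
@[simp] lemma lcV1031 : lcInt 1 0 3 1 = 0 := by decide
@[simp] lemma lcV1032 : lcInt 1 0 3 2 = 1 := by decide
@[simp] lemma lcV1033 : lcInt 1 0 3 3 = 0 := by decide
@[simp] lemma lcV1100 : lcInt 1 1 0 0 = 0 := by decide
@[simp] lemma lcV1101 : lcInt 1 1 0 1 = 0 := by decide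
@[simp] lemma lcV1102 : lcInt 1 1 0 2 = 0 := by decide
@[simp] lemma lcV1103 : lcInt 1 1 0 3 = 0 := by decide
@[simp] lemma lcV1110 : lcInt 1 1 1 0 = 0 := by decide
@[simp] lemma lcV1111 : lcInt 1 1 1 1 = 0 := by decide
@[simp] lemma lcV1112 : lcInt 1 1 1 2 = 0 := by decide
@[simp] lemma lcV1113 : lcInt 1 1 1 3 = 0 := by decide
@[simp] lemma lcV1120 : lcInt 1 1 2 0 = 0 := by decide
@[simp] lemma lcV1121 : lcInt 1 1 2 1 = 0 := by decide
@[simp] lemma lcV1122 : lcInt 1 1 2 2 = 0 := by decide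
@[simp] lemma lcV1123 : lcInt 1 1 2 3 = 0 := by decide
@[simp] lemma lcV1130 : lcInt 1 1 3 0 = 0 := by decide
@[simp] lemma lcV1131 : lcInt 1 1 3 1 = 0 := by decide
@[simp] lemma lcV1132 : lcInt 1 1 3 2 = 0 := by decide
@[simp] lemma lcV1133 : lcInt 1 1 3 3 = 0 := by decide
@[simp] lemma lcV1200 : lcInt 1 2 0 0 = 0 := by decide
@[simp] lemma lcV1201 : lcInt 1 2 0 1 = 0 := by decide
@[simp] lemma lcV1202 : lcInt 1 2 0 2 = 0 := by decide
@[simp] lemma lcV1203 : lcInt 1 2 0 3 = 1 := by decide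
@[simp] lemma lcV1210 : lcInt 1 2 1 0 = 0 := by decide
@[simp] lemma lcV1211 : lcInt 1 2 1 1 = 0 := by decide
@[simp] lemma lcV1212 : lcInt 1 2 1 2 = 0 := by decide
@[simp] lemma lcV1213 : lcInt 1 2 1 3 = 0 := by decide
@[simp] lemma lcV1220 : lcInt 1 2 2 0 = 0 := by decide
@[simp] lemma lcV1221 : lcInt 1 2 2 1 = 0 := by decide
@[simp] lemma lcV1222 : lcInt 1 2 2 2 = 0 := by decide
@[simp] lemma lcV1223 : lcInt 1 2 2 3 = 0 := by decide
@[simp] lemma lcV1230 : lcInt 1 2 3 0 = -1 := by decide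
@[simp] lemma lcV1231 : lcInt 1 2 3 1 = 0 := by decide
@[simp] lemma lcV1232 : lcInt 1 2 3 2 = 0 := by decide
@[simp] lemma lcV1233 : lcInt 1 2 3 3 = 0 := by decide
@[simp] lemma lcV1300 : lcInt 1 3 0 0 = 0 := by decide
@[simp] lemma lcV1301 : lcInt 1 3 0 1 = 0 := by decide
@[simp] lemma lcV1302 : lcInt 1 3 0 2 = -1 := by decide
@[simp] lemma lcV1303 : lcInt 1 3 0 3 = 0 := by decide
@[simp] lemma lcV1310 : lcInt 1 3 1 0 = 0 := by decide
@[simp] lemma lcV1311 : lcInt 1 3 1 1 = 0 := by decide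
@[simp] lemma lcV1312 : lcInt 1 3 1 2 = 0 := by decide
@[simp] lemma lcV1313 : lcInt 1 3 1 3 = 0 := by decide
@[simp] lemma lcV1320 : lcInt 1 3 2 0 = 1 := by decide
@[simp] lemma lcV1321 : lcInt 1 3 2 1 = 0 := by decide
@[simp] lemma lcV1322 : lcInt 1 3 2 2 = 0 := by decide
@[simp] lemma lcV1323 : lcInt 1 3 2 3 = 0 := by decide
@[simp] lemma lcV1330 : lcInt 1 3 3 0 = 0 := by decide
@[simp] lemma lcV1331 : lcInt 1 3 3 1 = 0 := by decide
@[simp] lemma lcV1332 : lcInt 1 3 3 2 = 0 := by decide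
@[simp] lemma lcV1333 : lcInt 1 3 3 3 = 0 := by decide
@[simp] lemma lcV2000 : lcInt 2 0 0 0 = 0 := by decide
@[simp] lemma lcV2001 : lcInt 2 0 0 1 = 0 := by decide
@[simp] lemma lcV2002 : lcInt 2 0 0 2 = 0 := by decide
@[simp] lemma lcV2003 : lcInt 2 0 0 3 = 0 := by decide
@[simp] lemma lcV2010 : lcInt 2 0 1 0 = 0 := by decide
@[simp] lemma lcV2011 : lcInt 2 0 1 1 = 0 := by decide
@[simp] lemma lcV2012 : lcInt 2 0 1 2 = 0 := by decide
@[simp] lemma lcV2013 : lcInt 2 0 1 3 = 1 := by decide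
@[simp] lemma lcV2020 : lcInt 2 0 2 0 = 0 := by decide
@[simp] lemma lcV2021 : lcInt 2 0 2 1 = 0 := by decide
@[simp] lemma lcV2022 : lcInt 2 0 2 2 = 0 := by decide
@[simp] lemma lcV2023 : lcInt 2 0 2 3 = 0 := by decide
@[simp] lemma lcV2030 : lcInt 2 0 3 0 = 0 := by decide
@[simp] lemma lcV2031 : lcInt 2 0 3 1 = -1 := by decide
@[simp] lemma lcV2032 : lcInt 2 0 3 2 = 0 := by decide
@[simp] lemma lcV2033 : lcInt 2 0 3 3 = 0 := by decide
@[simp] lemma lcV2100 : lcInt 2 1 0 0 = 0 := by decide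
@[simp] lemma lcV2101 : lcInt 2 1 0 1 = 0 := by decide
@[simp] lemma lcV2102 : lcInt 2 1 0 2 = 0 := by decide
@[simp] lemma lcV2103 : lcInt 2 1 0 3 = -1 := by decide
@[simp] lemma lcV2110 : lcInt 2 1 1 0 = 0 := by decide
@[simp] lemma lcV2111 : lcInt 2 1 1 1 = 0 := by decide
@[simp] lemma lcV2112 : lcInt 2 1 1 2 = 0 := by decide
@[simp] lemma lcV2113 : lcInt 2 1 1 3 = 0 := by decide
@[simp] lemma lcV2120 : lcInt 2 1 2 0 = 0 := by decide
@[simp] lemma lcV2121 : lcInt 2 1 2 1 = 0 := by decide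
@[simp] lemma lcV2122 : lcInt 2 1 2 2 = 0 := by decide
@[simp] lemma lcV2123 : lcInt 2 1 2 3 = 0 := by decide
@[simp] lemma lcV2130 : lcInt 2 1 3 0 = 1 := by decide
@[simp] lemma lcV2131 : lcInt 2 1 3 1 = 0 := by decide
@[simp] lemma lcV2132 : lcInt 2 1 3 2 = 0 := by decide
@[simp] lemma lcV2133 : lcInt 2 1 3 3 = 0 := by decide
@[simp] lemma lcV2200 : lcInt 2 2 0 0 = 0 := by decide
@[simp] lemma lcV2201 : lcInt 2 2 0 1 = 0 := by decide
@[simp] lemma lcV2202 : lcInt 2 2 0 2 = 0 := by decide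
@[simp] lemma lcV2203 : lcInt 2 2 0 3 = 0 := by decide
@[simp] lemma lcV2210 : lcInt 2 2 1 0 = 0 := by decide
@[simp] lemma lcV2211 : lcInt 2 2 1 1 = 0 := by decide
@[simp] lemma lcV2212 : lcInt 2 2 1 2 = 0 := by decide
@[simp] lemma lcV2213 : lcInt 2 2 1 3 = 0 := by decide
@[simp] lemma lcV2220 : lcInt 2 2 2 0 = 0 := by decide
@[simp] lemma lcV2221 : lcInt 2 2 2 1 = 0 := by decide
@[simp] lemma lcV2222 : lcInt 2 2 2 2 = 0 := by decide
@[simp] lemma lcV2223 : lcInt 2 2 2 3 = 0 := by decide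
@[simp] lemma lcV2230 : lcInt 2 2 3 0 = 0 := by decide
@[simp] lemma lcV2231 : lcInt 2 2 3 1 = 0 := by decide
@[simp] lemma lcV2232 : lcInt 2 2 3 2 = 0 := by decide
@[simp] lemma lcV2233 : lcInt 2 2 3 3 = 0 := by decide
@[simp] lemma lcV2300 : lcInt 2 3 0 0 = 0 := by decide
@[simp] lemma lcV2301 : lcInt 2 3 0 1 = 1 := by decide
@[simp] lemma lcV2302 : lcInt 2 3 0 2 = 0 := by decide
@[simp] lemma lcV2303 : lcInt 2 3 0 3 = 0 := by decide
@[simp] lemma lcV2310 : lcInt 2 3 1 0 = -1 := by decide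
@[simp] lemma lcV2311 : lcInt 2 3 1 1 = 0 := by decide
@[simp] lemma lcV2312 : lcInt 2 3 1 2 = 0 := by decide
@[simp] lemma lcV2313 : lcInt 2 3 1 3 = 0 := by decide
@[simp] lemma lcV2320 : lcInt 2 3 2 0 = 0 := by decide
@[simp] lemma lcV2321 : lcInt 2 3 2 1 = 0 := by decide
@[simp] lemma lcV2322 : lcInt 2 3 2 2 = 0 := by decide
@[simp] lemma lcV2323 : lcInt 2 3 2 3 = 0 := by decide
@[simp] lemma lcV2330 : lcInt 2 3 3 0 = 0 := by decide
@[simp] lemma lcV2331 : lcInt 2 3 3 1 = 0 := by decide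
@[simp] lemma lcV2332 : lcInt 2 3 3 2 = 0 := by decide
@[simp] lemma lcV2333 : lcInt 2 3 3 3 = 0 := by decide
@[simp] lemma lcV3000 : lcInt 3 0 0 0 = 0 := by decide
@[simp] lemma lcV3001 : lcInt 3 0 0 1 = 0 := by decide
@[simp] lemma lcV3002 : lcInt 3 0 0 2 = 0 := by decide
@[simp] lemma lcV3003 : lcInt 3 0 0 3 = 0 := by decide
@[simp] lemma lcV3010 : lcInt 3 0 1 0 = 0 := by decide
@[simp] lemma lcV3011 : lcInt 3 0 1 1 = 0 := by decide
@[simp] lemma lcV3012 : lcInt 3 0 1 2 = -1 := by decide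
@[simp] lemma lcV3013 : lcInt 3 0 1 3 = 0 := by decide
@[simp] lemma lcV3020 : lcInt 3 0 2 0 = 0 := by decide
@[simp] lemma lcV3021 : lcInt 3 0 2 1 = 1 := by decide
@[simp] lemma lcV3022 : lcInt 3 0 2 2 = 0 := by decide
@[simp] lemma lcV3023 : lcInt 3 0 2 3 = 0 := by decide
@[simp] lemma lcV3030 : lcInt 3 0 3 0 = 0 := by decide
@[simp] lemma lcV3031 : lcInt 3 0 3 1 = 0 := by decide
@[simp] lemma lcV3032 : lcInt 3 0 3 2 = 0 := by decide
@[simp] lemma lcV3033 : lcInt 3 0 3 3 = 0 := by decide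
@[simp] lemma lcV3100 : lcInt 3 1 0 0 = 0 := by decide
@[simp] lemma lcV3101 : lcInt 3 1 0 1 = 0 := by decide
@[simp] lemma lcV3102 : lcInt 3 1 0 2 = 1 := by decide
@[simp] lemma lcV3103 : lcInt 3 1 0 3 = 0 := by decide
@[simp] lemma lcV3110 : lcInt 3 1 1 0 = 0 := by decide
@[simp] lemma lcV3111 : lcInt 3 1 1 1 = 0 := by decide
@[simp] lemma lcV3112 : lcInt 3 1 1 2 = 0 := by decide
@[simp] lemma lcV3113 : lcInt 3 1 1 3 = 0 := by decide
@[simp] lemma lcV3120 : lcInt 3 1 2 0 = -1 := by decide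
@[simp] lemma lcV3121 : lcInt 3 1 2 1 = 0 := by decide
@[simp] lemma lcV3122 : lcInt 3 1 2 2 = 0 := by decide
@[simp] lemma lcV3123 : lcInt 3 1 2 3 = 0 := by decide
@[simp] lemma lcV3130 : lcInt 3 1 3 0 = 0 := by decide
@[simp] lemma lcV3131 : lcInt 3 1 3 1 = 0 := by decide
@[simp] lemma lcV3132 : lcInt 3 1 3 2 = 0 := by decide
@[simp] lemma lcV3133 : lcInt 3 1 3 3 = 0 := by decide
@[simp] lemma lcV3200 : lcInt 3 2 0 0 = 0 := by decide
@[simp] lemma lcV3201 : lcInt 3 2 0 1 = -1 := by decide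
@[simp] lemma lcV3202 : lcInt 3 2 0 2 = 0 := by decide
@[simp] lemma lcV3203 : lcInt 3 2 0 3 = 0 := by decide
@[simp] lemma lcV3210 : lcInt 3 2 1 0 = 1 := by decide
@[simp] lemma lcV3211 : lcInt 3 2 1 1 = 0 := by decide
@[simp] lemma lcV3212 : lcInt 3 2 1 2 = 0 := by decide
@[simp] lemma lcV3213 : lcInt 3 2 1 3 = 0 := by decide
@[simp] lemma lcV3220 : lcInt 3 2 2 0 = 0 := by decide
@[simp] lemma lcV3221 : lcInt 3 2 2 1 = 0 := by decide
@[simp] lemma lcV3222 : lcInt 3 2 2 2 = 0 := by decide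
@[simp] lemma lcV3223 : lcInt 3 2 2 3 = 0 := by decide
@[simp] lemma lcV3230 : lcInt 3 2 3 0 = 0 := by decide
@[simp] lemma lcV3231 : lcInt 3 2 3 1 = 0 := by decide
@[simp] lemma lcV3232 : lcInt 3 2 3 2 = 0 := by decide
@[simp] lemma lcV3233 : lcInt 3 2 3 3 = 0 := by decide
@[simp] lemma lcV3300 : lcInt 3 3 0 0 = 0 := by decide
@[simp] lemma lcV3301 : lcInt 3 3 0 1 = 0 := by decide
@[simp] lemma lcV3302 : lcInt 3 3 0 2 = 0 := by decide
@[simp] lemma lcV3303 : lcInt 3 3 0 3 = 0 := by decide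
@[simp] lemma lcV3310 : lcInt 3 3 1 0 = 0 := by decide
@[simp] lemma lcV3311 : lcInt 3 3 1 1 = 0 := by decide
@[simp] lemma lcV3312 : lcInt 3 3 1 2 = 0 := by decide
@[simp] lemma lcV3313 : lcInt 3 3 1 3 = 0 := by decide
@[simp] lemma lcV3320 : lcInt 3 3 2 0 = 0 := by decide
@[simp] lemma lcV3321 : lcInt 3 3 2 1 = 0 := by decide
@[simp] lemma lcV3322 : lcInt 3 3 2 2 = 0 := by decide
@[simp] lemma lcV3323 : lcInt 3 3 2 3 = 0 := by decide
@[simp] lemma lcV3330 : lcInt 3 3 3 0 = 0 := by decide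
@[simp] lemma lcV3331 : lcInt 3 3 3 1 = 0 := by decide
@[simp] lemma lcV3332 : lcInt 3 3 3 2 = 0 := by decide
@[simp] lemma lcV3333 : lcInt 3 3 3 3 = 0 := by decide

@[simp] lemma ll10 : aLow 1 * aLow 0 = -(aLow 0 * aLow 1) := low_low 1 0
@[simp] lemma ll10' (x : Cl) : aLow 1 * (aLow 0 * x) = -(aLow 0 * (aLow 1 * x)) := by rw [← mul_assoc, low_low 1 0, neg_mul, mul_assoc]
@[simp] lemma uu10 : aUp 1 * aUp 0 = -(aUp 0 * aUp 1) := up_up 1 0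
@[simp] lemma uu10' (x : Cl) : aUp 1 * (aUp 0 * x) = -(aUp 0 * (aUp 1 * x)) := by rw [← mul_assoc, up_up 1 0, neg_mul, mul_assoc]
@[simp] lemma ll20 : aLow 2 * aLow 0 = -(aLow 0 * aLow 2) := low_low 2 0
@[simp] lemma ll20' (x : Cl) : aLow 2 * (aLow 0 * x) = -(aLow 0 * (aLow 2 * x)) := by rw [← mul_assoc, low_low 2 0, neg_mul, mul_assoc]
@[simp] lemma uu20 : aUp 2 * aUp 0 = -(aUp 0 * aUp 2) := up_up 2 0
@[simp] lemma uu20' (x : Cl) : aUp 2 * (aUp 0 * x) = -(aUp 0 * (aUp 2 * x)) := by rw [← mul_assoc, up_up 2 0, neg_mul, mul_assoc]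
@[simp] lemma ll21 : aLow 2 * aLow 1 = -(aLow 1 * aLow 2) := low_low 2 1
@[simp] lemma ll21' (x : Cl) : aLow 2 * (aLow 1 * x) = -(aLow 1 * (aLow 2 * x)) := by rw [← mul_assoc, low_low 2 1, neg_mul, mul_assoc]
@[simp] lemma uu21 : aUp 2 * aUp 1 = -(aUp 1 * aUp 2) := up_up 2 1
@[simp] lemma uu21' (x : Cl) : aUp 2 * (aUp 1 * x) = -(aUp 1 * (aUp 2 * x)) := by rw [← mul_assoc, up_up 2 1, neg_mul, mul_assoc]
@[simp] lemma ll30 : aLow 3 * aLow 0 = -(aLow 0 * aLow 3) := low_low 3 0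
@[simp] lemma ll30' (x : Cl) : aLow 3 * (aLow 0 * x) = -(aLow 0 * (aLow 3 * x)) := by rw [← mul_assoc, low_low 3 0, neg_mul, mul_assoc]
@[simp] lemma uu30 : aUp 3 * aUp 0 = -(aUp 0 * aUp 3) := up_up 3 0
@[simp] lemma uu30' (x : Cl) : aUp 3 * (aUp 0 * x) = -(aUp 0 * (aUp 3 * x)) := by rw [← mul_assoc, up_up 3 0, neg_mul, mul_assoc]
@[simp] lemma ll31 : aLow 3 * aLow 1 = -(aLow 1 * aLow 3) := low_low 3 1
@[simp] lemma ll31' (x : Cl) : aLow 3 * (aLow 1 * x) = -(aLow 1 * (aLow 3 * x)) := by rw [← mul_assoc, low_low 3 1, neg_mul, mul_assoc]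
@[simp] lemma uu31 : aUp 3 * aUp 1 = -(aUp 1 * aUp 3) := up_up 3 1
@[simp] lemma uu31' (x : Cl) : aUp 3 * (aUp 1 * x) = -(aUp 1 * (aUp 3 * x)) := by rw [← mul_assoc, up_up 3 1, neg_mul, mul_assoc]
@[simp] lemma ll32 : aLow 3 * aLow 2 = -(aLow 2 * aLow 3) := low_low 3 2
@[simp] lemma ll32' (x : Cl) : aLow 3 * (aLow 2 * x) = -(aLow 2 * (aLow 3 * x)) := by rw [← mul_assoc, low_low 3 2, neg_mul, mul_assoc]
@[simp] lemma uu32 : aUp 3 * aUp 2 = -(aUp 2 * aUp 3) := up_up 3 2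
@[simp] lemma uu32' (x : Cl) : aUp 3 * (aUp 2 * x) = -(aUp 2 * (aUp 3 * x)) := by rw [← mul_assoc, up_up 3 2, neg_mul, mul_assoc]
@[simp] lemma lsq0 : aLow 0 * aLow 0 = 0 := low_sq 0
@[simp] lemma lsq0' (x : Cl) : aLow 0 * (aLow 0 * x) = 0 := by rw [← mul_assoc, low_sq 0, zero_mul]
@[simp] lemma usq0 : aUp 0 * aUp 0 = 0 := up_sq 0
@[simp] lemma usq0' (x : Cl) : aUp 0 * (aUp 0 * x) = 0 := by rw [← mul_assoc, up_sq 0, zero_mul]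
@[simp] lemma lsq1 : aLow 1 * aLow 1 = 0 := low_sq 1
@[simp] lemma lsq1' (x : Cl) : aLow 1 * (aLow 1 * x) = 0 := by rw [← mul_assoc, low_sq 1, zero_mul]
@[simp] lemma usq1 : aUp 1 * aUp 1 = 0 := up_sq 1
@[simp] lemma usq1' (x : Cl) : aUp 1 * (aUp 1 * x) = 0 := by rw [← mul_assoc, up_sq 1, zero_mul]
@[simp] lemma lsq2 : aLow 2 * aLow 2 = 0 := low_sq 2
@[simp] lemma lsq2' (x : Cl) : aLow 2 * (aLow 2 * x) = 0 := by rw [← mul_assoc, low_sq 2, zero_mul]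
@[simp] lemma usq2 : aUp 2 * aUp 2 = 0 := up_sq 2
@[simp] lemma usq2' (x : Cl) : aUp 2 * (aUp 2 * x) = 0 := by rw [← mul_assoc, up_sq 2, zero_mul]
@[simp] lemma lsq3 : aLow 3 * aLow 3 = 0 := low_sq 3
@[simp] lemma lsq3' (x : Cl) : aLow 3 * (aLow 3 * x) = 0 := by rw [← mul_assoc, low_sq 3, zero_mul]
@[simp] lemma usq3 : aUp 3 * aUp 3 = 0 := up_sq 3
@[simp] lemma usq3' (x : Cl) : aUp 3 * (aUp 3 * x) = 0 := by rw [← mul_assoc, up_sq 3, zero_mul]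
@[simp] lemma lu00 : aLow 0 * aUp 0 = 1 - aUp 0 * aLow 0 := by rw [low_up]; simp
@[simp] lemma lu00' (x : Cl) : aLow 0 * (aUp 0 * x) = x - aUp 0 * (aLow 0 * x) := by rw [← mul_assoc, lu00, sub_mul, one_mul, mul_assoc]
@[simp] lemma lu01 : aLow 0 * aUp 1 = -(aUp 1 * aLow 0) := by rw [low_up]; simp
@[simp] lemma lu01' (x : Cl) : aLow 0 * (aUp 1 * x) = -(aUp 1 * (aLow 0 * x)) := by rw [← mul_assoc, lu01, neg_mul, mul_assoc]
@[simp] lemma lu02 : aLow 0 * aUp 2 = -(aUp 2 * aLow 0) := by rw [low_up]; simp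
@[simp] lemma lu02' (x : Cl) : aLow 0 * (aUp 2 * x) = -(aUp 2 * (aLow 0 * x)) := by rw [← mul_assoc, lu02, neg_mul, mul_assoc]
@[simp] lemma lu03 : aLow 0 * aUp 3 = -(aUp 3 * aLow 0) := by rw [low_up]; simp
@[simp] lemma lu03' (x : Cl) : aLow 0 * (aUp 3 * x) = -(aUp 3 * (aLow 0 * x)) := by rw [← mul_assoc, lu03, neg_mul, mul_assoc]
@[simp] lemma lu10 : aLow 1 * aUp 0 = -(aUp 0 * aLow 1) := by rw [low_up]; simp
@[simp] lemma lu10' (x : Cl) : aLow 1 * (aUp 0 * x) = -(aUp 0 * (aLow 1 * x)) := by rw [← mul_assoc, lu10, neg_mul, mul_assoc]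
@[simp] lemma lu11 : aLow 1 * aUp 1 = 1 - aUp 1 * aLow 1 := by rw [low_up]; simp
@[simp] lemma lu11' (x : Cl) : aLow 1 * (aUp 1 * x) = x - aUp 1 * (aLow 1 * x) := by rw [← mul_assoc, lu11, sub_mul, one_mul, mul_assoc]
@[simp] lemma lu12 : aLow 1 * aUp 2 = -(aUp 2 * aLow 1) := by rw [low_up]; simp
@[simp] lemma lu12' (x : Cl) : aLow 1 * (aUp 2 * x) = -(aUp 2 * (aLow 1 * x)) := by rw [← mul_assoc, lu12, neg_mul, mul_assoc]
@[simp] lemma lu13 : aLow 1 * aUp 3 = -(aUp 3 * aLow 1) := by rw [low_up]; simp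
@[simp] lemma lu13' (x : Cl) : aLow 1 * (aUp 3 * x) = -(aUp 3 * (aLow 1 * x)) := by rw [← mul_assoc, lu13, neg_mul, mul_assoc]
@[simp] lemma lu20 : aLow 2 * aUp 0 = -(aUp 0 * aLow 2) := by rw [low_up]; simp
@[simp] lemma lu20' (x : Cl) : aLow 2 * (aUp 0 * x) = -(aUp 0 * (aLow 2 * x)) := by rw [← mul_assoc, lu20, neg_mul, mul_assoc]
@[simp] lemma lu21 : aLow 2 * aUp 1 = -(aUp 1 * aLow 2) := by rw [low_up]; simp
@[simp] lemma lu21' (x : Cl) : aLow 2 * (aUp 1 * x) = -(aUp 1 * (aLow 2 * x)) := by rw [← mul_assoc, lu21, neg_mul, mul_assoc]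
@[simp] lemma lu22 : aLow 2 * aUp 2 = 1 - aUp 2 * aLow 2 := by rw [low_up]; simp
@[simp] lemma lu22' (x : Cl) : aLow 2 * (aUp 2 * x) = x - aUp 2 * (aLow 2 * x) := by rw [← mul_assoc, lu22, sub_mul, one_mul, mul_assoc]
@[simp] lemma lu23 : aLow 2 * aUp 3 = -(aUp 3 * aLow 2) := by rw [low_up]; simp
@[simp] lemma lu23' (x : Cl) : aLow 2 * (aUp 3 * x) = -(aUp 3 * (aLow 2 * x)) := by rw [← mul_assoc, lu23, neg_mul, mul_assoc]
@[simp] lemma lu30 : aLow 3 * aUp 0 = -(aUp 0 * aLow 3) := by rw [low_up]; simp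
@[simp] lemma lu30' (x : Cl) : aLow 3 * (aUp 0 * x) = -(aUp 0 * (aLow 3 * x)) := by rw [← mul_assoc, lu30, neg_mul, mul_assoc]
@[simp] lemma lu31 : aLow 3 * aUp 1 = -(aUp 1 * aLow 3) := by rw [low_up]; simp
@[simp] lemma lu31' (x : Cl) : aLow 3 * (aUp 1 * x) = -(aUp 1 * (aLow 3 * x)) := by rw [← mul_assoc, lu31, neg_mul, mul_assoc]
@[simp] lemma lu32 : aLow 3 * aUp 2 = -(aUp 2 * aLow 3) := by rw [low_up]; simp
@[simp] lemma lu32' (x : Cl) : aLow 3 * (aUp 2 * x) = -(aUp 2 * (aLow 3 * x)) := by rw [← mul_assoc, lu32, neg_mul, mul_assoc]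
@[simp] lemma lu33 : aLow 3 * aUp 3 = 1 - aUp 3 * aLow 3 := by rw [low_up]; simp
@[simp] lemma lu33' (x : Cl) : aLow 3 * (aUp 3 * x) = x - aUp 3 * (aLow 3 * x) := by rw [← mul_assoc, lu33, sub_mul, one_mul, mul_assoc]

lemma sbar0 : fermSbar 0 = aLow 1 * (aLow 2 * aLow 3) := by
  rw [fermSbar]
  simp only [Fin.sum_univ_four, lc_cast]
  simp [mul_assoc]
  module

lemma sS0 : fermS 0 = aUp 1 * (aUp 2 * aUp 3) := by
  rw [fermS]
  simp only [Fin.sum_univ_four, lc_cast]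
  simp [mul_assoc]
  module

lemma sbar1 : fermSbar 1 = -(aLow 0 * (aLow 2 * aLow 3)) := by
  rw [fermSbar]
  simp only [Fin.sum_univ_four, lc_cast]
  simp [mul_assoc]
  module

lemma sS1 : fermS 1 = -(aUp 0 * (aUp 2 * aUp 3)) := by
  rw [fermS]
  simp only [Fin.sum_univ_four, lc_cast]
  simp [mul_assoc]
  module

lemma sbar2 : fermSbar 2 = aLow 0 * (aLow 1 * aLow 3) := by
  rw [fermSbar]
  simp only [Fin.sum_univ_four, lc_cast]
  simp [mul_assoc]
  module

lemma sS2 : fermS 2 = aUp 0 * (aUp 1 * aUp 3) := by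
  rw [fermS]
  simp only [Fin.sum_univ_four, lc_cast]
  simp [mul_assoc]
  module

lemma sbar3 : fermSbar 3 = -(aLow 0 * (aLow 1 * aLow 2)) := by
  rw [fermSbar]
  simp only [Fin.sum_univ_four, lc_cast]
  simp [mul_assoc]
  module

lemma sS3 : fermS 3 = -(aUp 0 * (aUp 1 * aUp 2)) := by
  rw [fermS]
  simp only [Fin.sum_univ_four, lc_cast]
  simp [mul_assoc]
  module

set_option maxHeartbeats 1000000 in
/-- The quadratic anticommutation relation of the fermionic oscillator realization:
`{S̄^i, S_j} = E^i_j(⟨E⟩ − 2) + δ^i_j(−½⟨E⟩² + (3/2)⟨E⟩) − δ^i_j`. -/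
theorem fermS_anticommutator (i j : Fin 4) :
    fermSbar i * fermS j + fermS j * fermSbar i =
      fermE i j * (fermTrE - 2) +
        (if i = j then (-(1 / 2 : ℂ)) • (fermTrE * fermTrE) + (3 / 2 : ℂ) • fermTrE
          else 0) -
        (if i = j then 1 else 0) := by
  have hcases : ∀ x : Fin 4, x = 0 ∨ x = 1 ∨ x = 2 ∨ x = 3 := by decide
  rcases hcases i with rfl | rfl | rfl | rfl <;>
    rcases hcases j with rfl | rfl | rfl | rfl <;>
  · first
    | rw [if_pos rfl, if_pos rfl]
    | rw [if_neg (by decide), if_neg (by decide)]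
    rw [show (2:Cl) = ((1:Cl)+1) from by norm_num]
    simp only [sbar0, sbar1, sbar2, sbar3, sS0, sS1, sS2, sS3, fermE, fermTrE,
      Fin.sum_univ_four]
    simp [mul_assoc, mul_add, add_mul, mul_sub, sub_mul]
    module
end

section
/- Let gl(4,ℂ) be the Lie algebra of 4×4 complex matrices with commutator bracket and matrix units E_{ab}. Let V be a Lie module over gl(4,ℂ) and v ∈ V a nonzero vector with E_{ab} ⬝ v = 0 for all a > b and E_{aa} ⬝ v = μ_a • v for scalars μ_1,…,μ_4 ∈ ℂ. Define d = ½(μ_1+μ_2−μ_3−μ_4), j_1 = ½(μ_2−μ_1), j_2 = ½(μ_4−μ_3). Let P_0 be the 4×4 matrix ½·[[I₂, I₂],[−I₂, −I₂]] (2×2 blocks) and, for k = 1,2,3, let P_k = ½·[[σ_k, σ_k],[−σ_k, −σ_k]] with σ_k the Pauli matrices. If P_0 ⬝ (P_0 ⬝ v) − Σ_{k=1}^3 P_k ⬝ (P_k ⬝ v) = 0, then d(d−1) = j_1(j_1+1) + j_2(j_2+1) − 2 j_1 j_2. -/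
open scoped BigOperators

attribute [local instance 100] LieRing.ofAssociativeRing

/-- The matrix unit `E_{ab}` of `gl(4,ℂ)`. -/
noncomputable def glE (a b : Fin 4) : Matrix (Fin 4) (Fin 4) ℂ :=
  Matrix.single a b 1

/-- The Pauli matrices `σ₁, σ₂, σ₃`. -/
noncomputable def pauli : Fin 3 → Matrix (Fin 2) (Fin 2) ℂ :=
  ![!![0, 1; 1, 0], !![0, -Complex.I; Complex.I, 0], !![1, 0; 0, -1]]

/-- The translation generator `P₀ = ½·[[I₂, I₂], [−I₂, −I₂]]` in the fundamental
representation. -/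
noncomputable def transP0 : Matrix (Fin 4) (Fin 4) ℂ :=
  (1 / 2 : ℂ) •
    (Matrix.reindex (finSumFinEquiv (m := 2) (n := 2)) (finSumFinEquiv (m := 2) (n := 2))
      (Matrix.fromBlocks (1 : Matrix (Fin 2) (Fin 2) ℂ) 1 (-1) (-1)) :
      Matrix (Fin 4) (Fin 4) ℂ)

/-- The translation generators `P_k = ½·[[σ_k, σ_k], [−σ_k, −σ_k]]`, `k = 1,2,3`,
in the fundamental representation. -/
noncomputable def transP (k : Fin 3) : Matrix (Fin 4) (Fin 4) ℂ :=
  (1 / 2 : ℂ) •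
    (Matrix.reindex (finSumFinEquiv (m := 2) (n := 2)) (finSumFinEquiv (m := 2) (n := 2))
      (Matrix.fromBlocks (pauli k) (pauli k) (-pauli k) (-pauli k)) :
      Matrix (Fin 4) (Fin 4) ℂ)

lemma glE_mul (a b c d : Fin 4) : glE a b * glE c d = if b = c then glE a d else 0 := by
  unfold glE
  split
  · subst ‹b = c›
    rw [Matrix.single_mul_single_same, one_mul]
  · next h => exact Matrix.single_mul_single_of_ne (c := (1:ℂ)) a b c h 1

lemma glE_lie (a b c d : Fin 4) :
    ⁅glE a b, glE c d⁆ = (if b = c then glE a d else 0) - (if d = a then glE c b else 0) := by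
  rw [Ring.lie_def, glE_mul, glE_mul]

lemma es0 : (finSumFinEquiv (m := 2) (n := 2)).symm 0 = Sum.inl 0 := by decide
lemma es1 : (finSumFinEquiv (m := 2) (n := 2)).symm 1 = Sum.inl 1 := by decide
lemma es2 : (finSumFinEquiv (m := 2) (n := 2)).symm 2 = Sum.inr 0 := by decide
lemma es3 : (finSumFinEquiv (m := 2) (n := 2)).symm 3 = Sum.inr 1 := by decide

set_option maxHeartbeats 1000000 in
/-- If a nonzero lowest-weight vector `v` of a `gl(4,ℂ)`-module with lowest weight `μ`
is annihilated by the mass-squared operator `P₀² − Σₖ Pₖ²`, then the conformal labels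
`d = ½(μ₁+μ₂−μ₃−μ₄)`, `j₁ = ½(μ₂−μ₁)`, `j₂ = ½(μ₄−μ₃)` satisfy
`d(d−1) = j₁(j₁+1) + j₂(j₂+1) − 2j₁j₂` (indices here are `0`-based). -/
theorem massless_lowest_weight_condition (V : Type*) [AddCommGroup V] [Module ℂ V]
    [LieRingModule (Matrix (Fin 4) (Fin 4) ℂ) V]
    [LieModule ℂ (Matrix (Fin 4) (Fin 4) ℂ) V]
    (v : V) (hv : v ≠ 0) (μ : Fin 4 → ℂ)
    (hlow : ∀ a b : Fin 4, b < a → ⁅glE a b, v⁆ = 0)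
    (hdiag : ∀ a : Fin 4, ⁅glE a a, v⁆ = μ a • v)
    (d j1 j2 : ℂ)
    (hd : d = (1 / 2 : ℂ) * (μ 0 + μ 1 - μ 2 - μ 3))
    (hj1 : j1 = (1 / 2 : ℂ) * (μ 1 - μ 0))
    (hj2 : j2 = (1 / 2 : ℂ) * (μ 3 - μ 2))
    (hmassless : ⁅transP0, ⁅transP0, v⁆⁆ - ∑ k : Fin 3, ⁅transP k, ⁅transP k, v⁆⁆ = 0) :
    d * (d - 1) = j1 * (j1 + 1) + j2 * (j2 + 1) - 2 * j1 * j2 := by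
  classical
  have hP0 : transP0 = (((1)/2) : ℂ) • glE 0 0 + (((1)/2) : ℂ) • glE 0 2 + (((1)/2) : ℂ) • glE 1 1 + (((1)/2) : ℂ) • glE 1 3 + (((-1)/2) : ℂ) • glE 2 0 + (((-1)/2) : ℂ) • glE 2 2 + (((-1)/2) : ℂ) • glE 3 1 + (((-1)/2) : ℂ) • glE 3 3 := by
    ext i j
    fin_cases i <;> fin_cases j <;>
      simp [transP0, transP, Matrix.reindex_apply, Matrix.submatrix_apply, es0, es1, es2, es3,
        glE, Matrix.single, Matrix.one_apply, pauli] <;> (try ring)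
  have hP1 : transP 0 = (((1)/2) : ℂ) • glE 0 1 + (((1)/2) : ℂ) • glE 0 3 + (((1)/2) : ℂ) • glE 1 0 + (((1)/2) : ℂ) • glE 1 2 + (((-1)/2) : ℂ) • glE 2 1 + (((-1)/2) : ℂ) • glE 2 3 + (((-1)/2) : ℂ) • glE 3 0 + (((-1)/2) : ℂ) • glE 3 2 := by
    ext i j
    fin_cases i <;> fin_cases j <;>
      simp [transP0, transP, Matrix.reindex_apply, Matrix.submatrix_apply, es0, es1, es2, es3,
        glE, Matrix.single, Matrix.one_apply, pauli] <;> (try ring)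
  have hP2 : transP 1 = ((((-1)/2) * Complex.I) : ℂ) • glE 0 1 + ((((-1)/2) * Complex.I) : ℂ) • glE 0 3 + ((((1)/2) * Complex.I) : ℂ) • glE 1 0 + ((((1)/2) * Complex.I) : ℂ) • glE 1 2 + ((((1)/2) * Complex.I) : ℂ) • glE 2 1 + ((((1)/2) * Complex.I) : ℂ) • glE 2 3 + ((((-1)/2) * Complex.I) : ℂ) • glE 3 0 + ((((-1)/2) * Complex.I) : ℂ) • glE 3 2 := by
    ext i j
    fin_cases i <;> fin_cases j <;>
      simp [transP0, transP, Matrix.reindex_apply, Matrix.submatrix_apply, es0, es1, es2, es3,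
        glE, Matrix.single, Matrix.one_apply, pauli] <;> (try ring)
  have hP3 : transP 2 = (((1)/2) : ℂ) • glE 0 0 + (((1)/2) : ℂ) • glE 0 2 + (((-1)/2) : ℂ) • glE 1 1 + (((-1)/2) : ℂ) • glE 1 3 + (((-1)/2) : ℂ) • glE 2 0 + (((-1)/2) : ℂ) • glE 2 2 + (((1)/2) : ℂ) • glE 3 1 + (((1)/2) : ℂ) • glE 3 3 := by
    ext i j
    fin_cases i <;> fin_cases j <;>
      simp [transP0, transP, Matrix.reindex_apply, Matrix.submatrix_apply, es0, es1, es2, es3,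
        glE, Matrix.single, Matrix.one_apply, pauli] <;> (try ring)
  have hl10 : ⁅glE 1 0, v⁆ = 0 := hlow 1 0 (by decide)
  have hl20 : ⁅glE 2 0, v⁆ = 0 := hlow 2 0 (by decide)
  have hl21 : ⁅glE 2 1, v⁆ = 0 := hlow 2 1 (by decide)
  have hl30 : ⁅glE 3 0, v⁆ = 0 := hlow 3 0 (by decide)
  have hl31 : ⁅glE 3 1, v⁆ = 0 := hlow 3 1 (by decide)
  have hl32 : ⁅glE 3 2, v⁆ = 0 := hlow 3 2 (by decide)
  have n00_02 : ⁅glE 0 0, ⁅glE 0 2, v⁆⁆ = ((1) + (1) * μ 0 : ℂ) • ⁅glE 0 2, v⁆ := by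
    rw [leibniz_lie, glE_lie]
    simp (config := { decide := true }) only [if_true, if_false, sub_lie, zero_lie, lie_zero,
      lie_smul, hdiag, hl10, hl20, hl21, hl30, hl31, hl32, zero_sub, sub_zero, add_zero, zero_add, neg_zero, smul_zero, neg_lie, lie_neg, neg_neg]
    try module
  have n00_13 : ⁅glE 0 0, ⁅glE 1 3, v⁆⁆ = ((1) * μ 0 : ℂ) • ⁅glE 1 3, v⁆ := by
    rw [leibniz_lie, glE_lie]
    simp (config := { decide := true }) only [if_true, if_false, sub_lie, zero_lie, lie_zero,
      lie_smul, hdiag, hl10, hl20, hl21, hl30, hl31, hl32, zero_sub, sub_zero, add_zero, zero_add, neg_zero, smul_zero, neg_lie, lie_neg, neg_neg]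
    try module
  have n10_01 : ⁅glE 1 0, ⁅glE 0 1, v⁆⁆ = ((1) * μ 1 + (-1) * μ 0 : ℂ) • v := by
    rw [leibniz_lie, glE_lie]
    simp (config := { decide := true }) only [if_true, if_false, sub_lie, zero_lie, lie_zero,
      lie_smul, hdiag, hl10, hl20, hl21, hl30, hl31, hl32, zero_sub, sub_zero, add_zero, zero_add, neg_zero, smul_zero, neg_lie, lie_neg, neg_neg]
    try module
  have n10_03 : ⁅glE 1 0, ⁅glE 0 3, v⁆⁆ = ((1) : ℂ) • ⁅glE 1 3, v⁆ := by
    rw [leibniz_lie, glE_lie]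
    simp (config := { decide := true }) only [if_true, if_false, sub_lie, zero_lie, lie_zero,
      lie_smul, hdiag, hl10, hl20, hl21, hl30, hl31, hl32, zero_sub, sub_zero, add_zero, zero_add, neg_zero, smul_zero, neg_lie, lie_neg, neg_neg]
    try module
  have n10_12 : ⁅glE 1 0, ⁅glE 1 2, v⁆⁆ = (0 : V) := by
    rw [leibniz_lie, glE_lie]
    simp (config := { decide := true }) only [if_true, if_false, sub_lie, zero_lie, lie_zero,
      lie_smul, hdiag, hl10, hl20, hl21, hl30, hl31, hl32, zero_sub, sub_zero, add_zero, zero_add, neg_zero, smul_zero, neg_lie, lie_neg, neg_neg]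
    try module
  have n10_23 : ⁅glE 1 0, ⁅glE 2 3, v⁆⁆ = (0 : V) := by
    rw [leibniz_lie, glE_lie]
    simp (config := { decide := true }) only [if_true, if_false, sub_lie, zero_lie, lie_zero,
      lie_smul, hdiag, hl10, hl20, hl21, hl30, hl31, hl32, zero_sub, sub_zero, add_zero, zero_add, neg_zero, smul_zero, neg_lie, lie_neg, neg_neg]
    try module
  have n11_02 : ⁅glE 1 1, ⁅glE 0 2, v⁆⁆ = ((1) * μ 1 : ℂ) • ⁅glE 0 2, v⁆ := by
    rw [leibniz_lie, glE_lie]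
    simp (config := { decide := true }) only [if_true, if_false, sub_lie, zero_lie, lie_zero,
      lie_smul, hdiag, hl10, hl20, hl21, hl30, hl31, hl32, zero_sub, sub_zero, add_zero, zero_add, neg_zero, smul_zero, neg_lie, lie_neg, neg_neg]
    try module
  have n11_13 : ⁅glE 1 1, ⁅glE 1 3, v⁆⁆ = ((1) + (1) * μ 1 : ℂ) • ⁅glE 1 3, v⁆ := by
    rw [leibniz_lie, glE_lie]
    simp (config := { decide := true }) only [if_true, if_false, sub_lie, zero_lie, lie_zero,
      lie_smul, hdiag, hl10, hl20, hl21, hl30, hl31, hl32, zero_sub, sub_zero, add_zero, zero_add, neg_zero, smul_zero, neg_lie, lie_neg, neg_neg]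
    try module
  have n20_02 : ⁅glE 2 0, ⁅glE 0 2, v⁆⁆ = ((1) * μ 2 + (-1) * μ 0 : ℂ) • v := by
    rw [leibniz_lie, glE_lie]
    simp (config := { decide := true }) only [if_true, if_false, sub_lie, zero_lie, lie_zero,
      lie_smul, hdiag, hl10, hl20, hl21, hl30, hl31, hl32, zero_sub, sub_zero, add_zero, zero_add, neg_zero, smul_zero, neg_lie, lie_neg, neg_neg]
    try module
  have n20_13 : ⁅glE 2 0, ⁅glE 1 3, v⁆⁆ = (0 : V) := by
    rw [leibniz_lie, glE_lie]
    simp (config := { decide := true }) only [if_true, if_false, sub_lie, zero_lie, lie_zero,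
      lie_smul, hdiag, hl10, hl20, hl21, hl30, hl31, hl32, zero_sub, sub_zero, add_zero, zero_add, neg_zero, smul_zero, neg_lie, lie_neg, neg_neg]
    try module
  have n21_01 : ⁅glE 2 1, ⁅glE 0 1, v⁆⁆ = (0 : V) := by
    rw [leibniz_lie, glE_lie]
    simp (config := { decide := true }) only [if_true, if_false, sub_lie, zero_lie, lie_zero,
      lie_smul, hdiag, hl10, hl20, hl21, hl30, hl31, hl32, zero_sub, sub_zero, add_zero, zero_add, neg_zero, smul_zero, neg_lie, lie_neg, neg_neg]
    try module
  have n21_03 : ⁅glE 2 1, ⁅glE 0 3, v⁆⁆ = (0 : V) := by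
    rw [leibniz_lie, glE_lie]
    simp (config := { decide := true }) only [if_true, if_false, sub_lie, zero_lie, lie_zero,
      lie_smul, hdiag, hl10, hl20, hl21, hl30, hl31, hl32, zero_sub, sub_zero, add_zero, zero_add, neg_zero, smul_zero, neg_lie, lie_neg, neg_neg]
    try module
  have n21_12 : ⁅glE 2 1, ⁅glE 1 2, v⁆⁆ = ((1) * μ 2 + (-1) * μ 1 : ℂ) • v := by
    rw [leibniz_lie, glE_lie]
    simp (config := { decide := true }) only [if_true, if_false, sub_lie, zero_lie, lie_zero,
      lie_smul, hdiag, hl10, hl20, hl21, hl30, hl31, hl32, zero_sub, sub_zero, add_zero, zero_add, neg_zero, smul_zero, neg_lie, lie_neg, neg_neg]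
    try module
  have n21_23 : ⁅glE 2 1, ⁅glE 2 3, v⁆⁆ = (0 : V) := by
    rw [leibniz_lie, glE_lie]
    simp (config := { decide := true }) only [if_true, if_false, sub_lie, zero_lie, lie_zero,
      lie_smul, hdiag, hl10, hl20, hl21, hl30, hl31, hl32, zero_sub, sub_zero, add_zero, zero_add, neg_zero, smul_zero, neg_lie, lie_neg, neg_neg]
    try module
  have n22_02 : ⁅glE 2 2, ⁅glE 0 2, v⁆⁆ = ((-1) + (1) * μ 2 : ℂ) • ⁅glE 0 2, v⁆ := by
    rw [leibniz_lie, glE_lie]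
    simp (config := { decide := true }) only [if_true, if_false, sub_lie, zero_lie, lie_zero,
      lie_smul, hdiag, hl10, hl20, hl21, hl30, hl31, hl32, zero_sub, sub_zero, add_zero, zero_add, neg_zero, smul_zero, neg_lie, lie_neg, neg_neg]
    try module
  have n22_13 : ⁅glE 2 2, ⁅glE 1 3, v⁆⁆ = ((1) * μ 2 : ℂ) • ⁅glE 1 3, v⁆ := by
    rw [leibniz_lie, glE_lie]
    simp (config := { decide := true }) only [if_true, if_false, sub_lie, zero_lie, lie_zero,
      lie_smul, hdiag, hl10, hl20, hl21, hl30, hl31, hl32, zero_sub, sub_zero, add_zero, zero_add, neg_zero, smul_zero, neg_lie, lie_neg, neg_neg]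
    try module
  have n30_01 : ⁅glE 3 0, ⁅glE 0 1, v⁆⁆ = (0 : V) := by
    rw [leibniz_lie, glE_lie]
    simp (config := { decide := true }) only [if_true, if_false, sub_lie, zero_lie, lie_zero,
      lie_smul, hdiag, hl10, hl20, hl21, hl30, hl31, hl32, zero_sub, sub_zero, add_zero, zero_add, neg_zero, smul_zero, neg_lie, lie_neg, neg_neg]
    try module
  have n30_03 : ⁅glE 3 0, ⁅glE 0 3, v⁆⁆ = ((1) * μ 3 + (-1) * μ 0 : ℂ) • v := by
    rw [leibniz_lie, glE_lie]
    simp (config := { decide := true }) only [if_true, if_false, sub_lie, zero_lie, lie_zero,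
      lie_smul, hdiag, hl10, hl20, hl21, hl30, hl31, hl32, zero_sub, sub_zero, add_zero, zero_add, neg_zero, smul_zero, neg_lie, lie_neg, neg_neg]
    try module
  have n30_12 : ⁅glE 3 0, ⁅glE 1 2, v⁆⁆ = (0 : V) := by
    rw [leibniz_lie, glE_lie]
    simp (config := { decide := true }) only [if_true, if_false, sub_lie, zero_lie, lie_zero,
      lie_smul, hdiag, hl10, hl20, hl21, hl30, hl31, hl32, zero_sub, sub_zero, add_zero, zero_add, neg_zero, smul_zero, neg_lie, lie_neg, neg_neg]
    try module
  have n30_23 : ⁅glE 3 0, ⁅glE 2 3, v⁆⁆ = (0 : V) := by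
    rw [leibniz_lie, glE_lie]
    simp (config := { decide := true }) only [if_true, if_false, sub_lie, zero_lie, lie_zero,
      lie_smul, hdiag, hl10, hl20, hl21, hl30, hl31, hl32, zero_sub, sub_zero, add_zero, zero_add, neg_zero, smul_zero, neg_lie, lie_neg, neg_neg]
    try module
  have n31_02 : ⁅glE 3 1, ⁅glE 0 2, v⁆⁆ = (0 : V) := by
    rw [leibniz_lie, glE_lie]
    simp (config := { decide := true }) only [if_true, if_false, sub_lie, zero_lie, lie_zero,
      lie_smul, hdiag, hl10, hl20, hl21, hl30, hl31, hl32, zero_sub, sub_zero, add_zero, zero_add, neg_zero, smul_zero, neg_lie, lie_neg, neg_neg]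
    try module
  have n31_13 : ⁅glE 3 1, ⁅glE 1 3, v⁆⁆ = ((1) * μ 3 + (-1) * μ 1 : ℂ) • v := by
    rw [leibniz_lie, glE_lie]
    simp (config := { decide := true }) only [if_true, if_false, sub_lie, zero_lie, lie_zero,
      lie_smul, hdiag, hl10, hl20, hl21, hl30, hl31, hl32, zero_sub, sub_zero, add_zero, zero_add, neg_zero, smul_zero, neg_lie, lie_neg, neg_neg]
    try module
  have n32_01 : ⁅glE 3 2, ⁅glE 0 1, v⁆⁆ = (0 : V) := by
    rw [leibniz_lie, glE_lie]
    simp (config := { decide := true }) only [if_true, if_false, sub_lie, zero_lie, lie_zero,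
      lie_smul, hdiag, hl10, hl20, hl21, hl30, hl31, hl32, zero_sub, sub_zero, add_zero, zero_add, neg_zero, smul_zero, neg_lie, lie_neg, neg_neg]
    try module
  have n32_03 : ⁅glE 3 2, ⁅glE 0 3, v⁆⁆ = ((-1) : ℂ) • ⁅glE 0 2, v⁆ := by
    rw [leibniz_lie, glE_lie]
    simp (config := { decide := true }) only [if_true, if_false, sub_lie, zero_lie, lie_zero,
      lie_smul, hdiag, hl10, hl20, hl21, hl30, hl31, hl32, zero_sub, sub_zero, add_zero, zero_add, neg_zero, smul_zero, neg_lie, lie_neg, neg_neg]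
    try module
  have n32_12 : ⁅glE 3 2, ⁅glE 1 2, v⁆⁆ = (0 : V) := by
    rw [leibniz_lie, glE_lie]
    simp (config := { decide := true }) only [if_true, if_false, sub_lie, zero_lie, lie_zero,
      lie_smul, hdiag, hl10, hl20, hl21, hl30, hl31, hl32, zero_sub, sub_zero, add_zero, zero_add, neg_zero, smul_zero, neg_lie, lie_neg, neg_neg]
    try module
  have n32_23 : ⁅glE 3 2, ⁅glE 2 3, v⁆⁆ = ((1) * μ 3 + (-1) * μ 2 : ℂ) • v := by
    rw [leibniz_lie, glE_lie]
    simp (config := { decide := true }) only [if_true, if_false, sub_lie, zero_lie, lie_zero,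
      lie_smul, hdiag, hl10, hl20, hl21, hl30, hl31, hl32, zero_sub, sub_zero, add_zero, zero_add, neg_zero, smul_zero, neg_lie, lie_neg, neg_neg]
    try module
  have n33_02 : ⁅glE 3 3, ⁅glE 0 2, v⁆⁆ = ((1) * μ 3 : ℂ) • ⁅glE 0 2, v⁆ := by
    rw [leibniz_lie, glE_lie]
    simp (config := { decide := true }) only [if_true, if_false, sub_lie, zero_lie, lie_zero,
      lie_smul, hdiag, hl10, hl20, hl21, hl30, hl31, hl32, zero_sub, sub_zero, add_zero, zero_add, neg_zero, smul_zero, neg_lie, lie_neg, neg_neg]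
    try module
  have n33_13 : ⁅glE 3 3, ⁅glE 1 3, v⁆⁆ = ((-1) + (1) * μ 3 : ℂ) • ⁅glE 1 3, v⁆ := by
    rw [leibniz_lie, glE_lie]
    simp (config := { decide := true }) only [if_true, if_false, sub_lie, zero_lie, lie_zero,
      lie_smul, hdiag, hl10, hl20, hl21, hl30, hl31, hl32, zero_sub, sub_zero, add_zero, zero_add, neg_zero, smul_zero, neg_lie, lie_neg, neg_neg]
    try module
  have key0 : ⁅transP0, ⁅transP0, v⁆⁆ = (((-1)/4) * μ 3 + ((1)/4) * μ 3 * μ 3 + ((-1)/4) * μ 2 + ((1)/2) * μ 2 * μ 3 + ((1)/4) * μ 2 * μ 2 + ((1)/4) * μ 1 + ((-1)/2) * μ 1 * μ 3 + ((-1)/2) * μ 1 * μ 2 + ((1)/4) * μ 1 * μ 1 + ((1)/4) * μ 0 + ((-1)/2) * μ 0 * μ 3 + ((-1)/2) * μ 0 * μ 2 + ((1)/2) * μ 0 * μ 1 + ((1)/4) * μ 0 * μ 0 : ℂ) • v + (((1)/2) + ((-1)/2) * μ 3 + ((-1)/2) * μ 2 + ((1)/2) * μ 1 + ((1)/2) *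 μ 0 : ℂ) • ⁅glE 0 2, v⁆ + (((1)/2) + ((-1)/2) * μ 3 + ((-1)/2) * μ 2 + ((1)/2) * μ 1 + ((1)/2) * μ 0 : ℂ) • ⁅glE 1 3, v⁆ + (((1)/4) : ℂ) • ⁅glE 0 2, ⁅glE 0 2, v⁆⁆ + (((1)/4) : ℂ) • ⁅glE 0 2, ⁅glE 1 3, v⁆⁆ + (((1)/4) : ℂ) • ⁅glE 1 3, ⁅glE 0 2, v⁆⁆ + (((1)/4) : ℂ) • ⁅glE 1 3, ⁅glE 1 3, v⁆⁆ := by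
    rw [hP0]
    simp only [add_lie, sub_lie, smul_lie, neg_lie, lie_add, lie_sub, lie_smul, lie_neg, hdiag, hl10, hl20, hl21, hl30, hl31, hl32, n00_02, n00_13, n10_01, n10_03, n10_12, n10_23, n11_02, n11_13, n20_02, n20_13, n21_01, n21_03, n21_12, n21_23, n22_02, n22_13, n30_01, n30_03, n30_12, n30_23, n31_02, n31_13, n32_01, n32_03, n32_12, n32_23, n33_02, n33_13, lie_zero, zero_lie, smul_zero, zero_smul, smul_add, smul_sub, smul_neg, add_zero, zero_add, sub_zero, zero_sub]
    first
    | module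
    | (match_scalars <;> (ring_nf; simp [Complex.I_sq]; try ring_nf) <;> try norm_num)
  have key1 : ⁅transP 0, ⁅transP 0, v⁆⁆ = (((-1)/2) * μ 2 + ((1)/2) * μ 1 : ℂ) • v + (((1)/4) : ℂ) • ⁅glE 0 2, v⁆ + (((1)/4) : ℂ) • ⁅glE 1 3, v⁆ + (((1)/4) : ℂ) • ⁅glE 0 1, ⁅glE 0 1, v⁆⁆ + (((1)/4) : ℂ) • ⁅glE 0 1, ⁅glE 0 3, v⁆⁆ + (((1)/4) : ℂ) • ⁅glE 0 1, ⁅glE 1 2, v⁆⁆ + (((-1)/4) : ℂ) • ⁅glE 0 1, ⁅glE 2 3, v⁆⁆ + (((1)/4) : ℂ) • ⁅glE 0 3, ⁅glE 0 1, v⁆⁆ + (((1)/4) : ℂ) • ⁅glE 0 3, ⁅glE 0 3, v⁆⁆ + (((1)/4) : ℂ) • ⁅glE 0 3, ⁅glE 1 2, v⁆⁆ + (((-1)/4) : ℂ) • ⁅glE 0 3, ⁅glE 2 3, v⁆⁆ + (((1)/4) : ℂ) • ⁅glE 1 2, ⁅glE 0 1, v⁆⁆ + (((1)/4) : ℂ)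 • ⁅glE 1 2, ⁅glE 0 3, v⁆⁆ + (((1)/4) : ℂ) • ⁅glE 1 2, ⁅glE 1 2, v⁆⁆ + (((-1)/4) : ℂ) • ⁅glE 1 2, ⁅glE 2 3, v⁆⁆ + (((-1)/4) : ℂ) • ⁅glE 2 3, ⁅glE 0 1, v⁆⁆ + (((-1)/4) : ℂ) • ⁅glE 2 3, ⁅glE 0 3, v⁆⁆ + (((-1)/4) : ℂ) • ⁅glE 2 3, ⁅glE 1 2, v⁆⁆ + (((1)/4) : ℂ) • ⁅glE 2 3, ⁅glE 2 3, v⁆⁆ := by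
    rw [hP1]
    simp only [add_lie, sub_lie, smul_lie, neg_lie, lie_add, lie_sub, lie_smul, lie_neg, hdiag, hl10, hl20, hl21, hl30, hl31, hl32, n00_02, n00_13, n10_01, n10_03, n10_12, n10_23, n11_02, n11_13, n20_02, n20_13, n21_01, n21_03, n21_12, n21_23, n22_02, n22_13, n30_01, n30_03, n30_12, n30_23, n31_02, n31_13, n32_01, n32_03, n32_12, n32_23, n33_02, n33_13, lie_zero, zero_lie, smul_zero, zero_smul, smul_add, smul_sub, smul_neg, add_zero, zero_add, sub_zero, zero_sub]
    first
    | module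
    | (match_scalars <;> (ring_nf; simp [Complex.I_sq]; try ring_nf) <;> try norm_num)
  have key2 : ⁅transP 1, ⁅transP 1, v⁆⁆ = (((-1)/2) * μ 2 + ((1)/2) * μ 1 : ℂ) • v + (((1)/4) : ℂ) • ⁅glE 0 2, v⁆ + (((1)/4) : ℂ) • ⁅glE 1 3, v⁆ + (((-1)/4) : ℂ) • ⁅glE 0 1, ⁅glE 0 1, v⁆⁆ + (((-1)/4) : ℂ) • ⁅glE 0 1, ⁅glE 0 3, v⁆⁆ + (((1)/4) : ℂ) • ⁅glE 0 1, ⁅glE 1 2, v⁆⁆ + (((1)/4) : ℂ) • ⁅glE 0 1, ⁅glE 2 3, v⁆⁆ + (((-1)/4) : ℂ) • ⁅glE 0 3, ⁅glE 0 1, v⁆⁆ + (((-1)/4) : ℂ) • ⁅glE 0 3, ⁅glE 0 3, v⁆⁆ + (((1)/4) : ℂ) • ⁅glE 0 3, ⁅glE 1 2, v⁆⁆ + (((1)/4) : ℂ) • ⁅glE 0 3, ⁅glE 2 3, v⁆⁆ + (((1)/4) : ℂ) • ⁅glE 1 2, ⁅glE 0 1, v⁆⁆ + (((1)/4) : ℂ)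 • ⁅glE 1 2, ⁅glE 0 3, v⁆⁆ + (((-1)/4) : ℂ) • ⁅glE 1 2, ⁅glE 1 2, v⁆⁆ + (((-1)/4) : ℂ) • ⁅glE 1 2, ⁅glE 2 3, v⁆⁆ + (((1)/4) : ℂ) • ⁅glE 2 3, ⁅glE 0 1, v⁆⁆ + (((1)/4) : ℂ) • ⁅glE 2 3, ⁅glE 0 3, v⁆⁆ + (((-1)/4) : ℂ) • ⁅glE 2 3, ⁅glE 1 2, v⁆⁆ + (((-1)/4) : ℂ) • ⁅glE 2 3, ⁅glE 2 3, v⁆⁆ := by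
    rw [hP2]
    simp only [add_lie, sub_lie, smul_lie, neg_lie, lie_add, lie_sub, lie_smul, lie_neg, hdiag, hl10, hl20, hl21, hl30, hl31, hl32, n00_02, n00_13, n10_01, n10_03, n10_12, n10_23, n11_02, n11_13, n20_02, n20_13, n21_01, n21_03, n21_12, n21_23, n22_02, n22_13, n30_01, n30_03, n30_12, n30_23, n31_02, n31_13, n32_01, n32_03, n32_12, n32_23, n33_02, n33_13, lie_zero, zero_lie, smul_zero, zero_smul, smul_add, smul_sub, smul_neg, add_zero, zero_add, sub_zero, zero_sub]
    first
    | module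
    | (match_scalars <;> (ring_nf; simp [Complex.I_sq]; try ring_nf) <;> try norm_num)
  have key3 : ⁅transP 2, ⁅transP 2, v⁆⁆ = (((-1)/4) * μ 3 + ((1)/4) * μ 3 * μ 3 + ((-1)/4) * μ 2 + ((-1)/2) * μ 2 * μ 3 + ((1)/4) * μ 2 * μ 2 + ((1)/4) * μ 1 + ((-1)/2) * μ 1 * μ 3 + ((1)/2) * μ 1 * μ 2 + ((1)/4) * μ 1 * μ 1 + ((1)/4) * μ 0 + ((1)/2) * μ 0 * μ 3 + ((-1)/2) * μ 0 * μ 2 + ((-1)/2) * μ 0 * μ 1 + ((1)/4) * μ 0 * μ 0 : ℂ) • v + (((1)/2) + ((1)/2) * μ 3 + ((-1)/2) * μ 2 + ((-1)/2) * μ 1 + ((1)/2) * μ 0 : ℂ) • ⁅glE 0 2, v⁆ + (((1)/2) + ((-1)/2) * μ 3 + ((1)/2) * μ 2 + ((1)/2) * μ 1 + ((-1)/2) * μ 0 : ℂ) • ⁅glE 1 3, v⁆ + (((1)/4) : ℂ) • ⁅glE 0 2, ⁅glE 0 2, v⁆⁆ + (((-1)/4) : ℂ) • ⁅glE 0 2,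 ⁅glE 1 3, v⁆⁆ + (((-1)/4) : ℂ) • ⁅glE 1 3, ⁅glE 0 2, v⁆⁆ + (((1)/4) : ℂ) • ⁅glE 1 3, ⁅glE 1 3, v⁆⁆ := by
    rw [hP3]
    simp only [add_lie, sub_lie, smul_lie, neg_lie, lie_add, lie_sub, lie_smul, lie_neg, hdiag, hl10, hl20, hl21, hl30, hl31, hl32, n00_02, n00_13, n10_01, n10_03, n10_12, n10_23, n11_02, n11_13, n20_02, n20_13, n21_01, n21_03, n21_12, n21_23, n22_02, n22_13, n30_01, n30_03, n30_12, n30_23, n31_02, n31_13, n32_01, n32_03, n32_12, n32_23, n33_02, n33_13, lie_zero, zero_lie, smul_zero, zero_smul, smul_add, smul_sub, smul_neg, add_zero, zero_add, sub_zero, zero_sub]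
    first
    | module
    | (match_scalars <;> (ring_nf; simp [Complex.I_sq]; try ring_nf) <;> try norm_num)
  set hm : Matrix (Fin 4) (Fin 4) ℂ := glE 0 0 + glE 1 1 - glE 2 2 - glE 3 3 with hmdef
  set D : ℂ := μ 0 + μ 1 - μ 2 - μ 3 with hD
  have hev : ⁅hm, v⁆ = D • v := by
    rw [hmdef]
    simp only [add_lie, sub_lie, hdiag]
    module
  have hme01 : ⁅hm, glE 0 1⁆ = (0:ℂ) • glE 0 1 := by
    rw [hmdef]
    simp (config := { decide := true }) only [add_lie, sub_lie, glE_lie, if_true, if_false,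
      sub_zero, zero_sub, add_zero, zero_add, neg_zero]
    module
  have hme02 : ⁅hm, glE 0 2⁆ = (2:ℂ) • glE 0 2 := by
    rw [hmdef]
    simp (config := { decide := true }) only [add_lie, sub_lie, glE_lie, if_true, if_false,
      sub_zero, zero_sub, add_zero, zero_add, neg_zero]
    module
  have hme03 : ⁅hm, glE 0 3⁆ = (2:ℂ) • glE 0 3 := by
    rw [hmdef]
    simp (config := { decide := true }) only [add_lie, sub_lie, glE_lie, if_true, if_false,
      sub_zero, zero_sub, add_zero, zero_add, neg_zero]
    module
  have hme12 : ⁅hm, glE 1 2⁆ = (2:ℂ) • glE 1 2 := by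
    rw [hmdef]
    simp (config := { decide := true }) only [add_lie, sub_lie, glE_lie, if_true, if_false,
      sub_zero, zero_sub, add_zero, zero_add, neg_zero]
    module
  have hme13 : ⁅hm, glE 1 3⁆ = (2:ℂ) • glE 1 3 := by
    rw [hmdef]
    simp (config := { decide := true }) only [add_lie, sub_lie, glE_lie, if_true, if_false,
      sub_zero, zero_sub, add_zero, zero_add, neg_zero]
    module
  have hme23 : ⁅hm, glE 2 3⁆ = (0:ℂ) • glE 2 3 := by
    rw [hmdef]
    simp (config := { decide := true }) only [add_lie, sub_lie, glE_lie, if_true, if_false,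
      sub_zero, zero_sub, add_zero, zero_add, neg_zero]
    module
  have heu01 : ⁅hm, ⁅glE 0 1, v⁆⁆ = (D + 0) • ⁅glE 0 1, v⁆ := by
    rw [leibniz_lie, hme01, hev, smul_lie, lie_smul]
    module
  have heu02 : ⁅hm, ⁅glE 0 2, v⁆⁆ = (D + 2) • ⁅glE 0 2, v⁆ := by
    rw [leibniz_lie, hme02, hev, smul_lie, lie_smul]
    module
  have heu03 : ⁅hm, ⁅glE 0 3, v⁆⁆ = (D + 2) • ⁅glE 0 3, v⁆ := by
    rw [leibniz_lie, hme03, hev, smul_lie, lie_smul]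
    module
  have heu12 : ⁅hm, ⁅glE 1 2, v⁆⁆ = (D + 2) • ⁅glE 1 2, v⁆ := by
    rw [leibniz_lie, hme12, hev, smul_lie, lie_smul]
    module
  have heu13 : ⁅hm, ⁅glE 1 3, v⁆⁆ = (D + 2) • ⁅glE 1 3, v⁆ := by
    rw [leibniz_lie, hme13, hev, smul_lie, lie_smul]
    module
  have heu23 : ⁅hm, ⁅glE 2 3, v⁆⁆ = (D + 0) • ⁅glE 2 3, v⁆ := by
    rw [leibniz_lie, hme23, hev, smul_lie, lie_smul]
    module
  have hew01_12 : ⁅hm, ⁅glE 0 1, ⁅glE 1 2, v⁆⁆⁆ = (D + 2) • ⁅glE 0 1, ⁅glE 1 2, v⁆⁆ := by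
    rw [leibniz_lie, hme01, heu12, smul_lie, lie_smul]
    module
  have hew02_13 : ⁅hm, ⁅glE 0 2, ⁅glE 1 3, v⁆⁆⁆ = (D + 4) • ⁅glE 0 2, ⁅glE 1 3, v⁆⁆ := by
    rw [leibniz_lie, hme02, heu13, smul_lie, lie_smul]
    module
  have hew03_12 : ⁅hm, ⁅glE 0 3, ⁅glE 1 2, v⁆⁆⁆ = (D + 4) • ⁅glE 0 3, ⁅glE 1 2, v⁆⁆ := by
    rw [leibniz_lie, hme03, heu12, smul_lie, lie_smul]
    module
  have hew12_01 : ⁅hm, ⁅glE 1 2, ⁅glE 0 1, v⁆⁆⁆ = (D + 2) • ⁅glE 1 2, ⁅glE 0 1, v⁆⁆ := by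
    rw [leibniz_lie, hme12, heu01, smul_lie, lie_smul]
    module
  have hew12_03 : ⁅hm, ⁅glE 1 2, ⁅glE 0 3, v⁆⁆⁆ = (D + 4) • ⁅glE 1 2, ⁅glE 0 3, v⁆⁆ := by
    rw [leibniz_lie, hme12, heu03, smul_lie, lie_smul]
    module
  have hew12_23 : ⁅hm, ⁅glE 1 2, ⁅glE 2 3, v⁆⁆⁆ = (D + 2) • ⁅glE 1 2, ⁅glE 2 3, v⁆⁆ := by
    rw [leibniz_lie, hme12, heu23, smul_lie, lie_smul]
    module
  have hew13_02 : ⁅hm, ⁅glE 1 3, ⁅glE 0 2, v⁆⁆⁆ = (D + 4) • ⁅glE 1 3, ⁅glE 0 2, v⁆⁆ := by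
    rw [leibniz_lie, hme13, heu02, smul_lie, lie_smul]
    module
  have hew23_12 : ⁅hm, ⁅glE 2 3, ⁅glE 1 2, v⁆⁆⁆ = (D + 2) • ⁅glE 2 3, ⁅glE 1 2, v⁆⁆ := by
    rw [leibniz_lie, hme23, heu12, smul_lie, lie_smul]
    module
  set cc : ℂ := ((1) * μ 2 + (1) * μ 2 * μ 3 + (-1) * μ 1 + (-1) * μ 1 * μ 2 + (-1) * μ 0 * μ 3 + (1) * μ 0 * μ 1 : ℂ) with hcc
  set y2 : V := (((-1)/2) + (-1) * μ 3 + (1) * μ 1 : ℂ) • ⁅glE 0 2, v⁆ + (((-1)/2) + (-1) * μ 2 + (1) * μ 0 : ℂ) • ⁅glE 1 3, v⁆ + (((-1)/2) : ℂ) • ⁅glE 0 1, ⁅glE 1 2, v⁆⁆ + (((-1)/2) : ℂ) • ⁅glE 1 2, ⁅glE 0 1, v⁆⁆ + (((1)/2) : ℂ) • ⁅glE 1 2, ⁅glE 2 3, v⁆⁆ + (((1)/2) : ℂ) • ⁅glE 2 3, ⁅glE 1 2, v⁆⁆ with hy2def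
  set y4 : V := (((1)/2) : ℂ) • ⁅glE 0 2, ⁅glE 1 3, v⁆⁆ + (((-1)/2) : ℂ) • ⁅glE 0 3, ⁅glE 1 2, v⁆⁆ + (((-1)/2) : ℂ) • ⁅glE 1 2, ⁅glE 0 3, v⁆⁆ + (((1)/2) : ℂ) • ⁅glE 1 3, ⁅glE 0 2, v⁆⁆ with hy4def
  have hy2 : ⁅hm, y2⁆ = (D + 2) • y2 := by
    rw [hy2def]
    simp only [lie_add, lie_smul, heu01, heu02, heu03, heu12, heu13, heu23, hew01_12, hew02_13, hew03_12, hew12_01, hew12_03, hew12_23, hew13_02, hew23_12]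
    module
  have hy4 : ⁅hm, y4⁆ = (D + 4) • y4 := by
    rw [hy4def]
    simp only [lie_add, lie_smul, heu01, heu02, heu03, heu12, heu13, heu23, hew01_12, hew02_13, hew03_12, hew12_01, hew12_03, hew12_23, hew13_02, hew23_12]
    module
  rw [Fin.sum_univ_three] at hmassless
  rw [key0, key1, key2, key3] at hmassless
  have e0 : cc • v + y2 + y4 = 0 := by
    rw [← hmassless, hcc, hy2def, hy4def]
    module
  have e1 : (cc * D) • v + (D + 2) • y2 + (D + 4) • y4 = 0 := by
    have t := congrArg (fun x => ⁅hm, x⁆) e0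
    simp only [lie_add, lie_smul, lie_zero, hev, hy2, hy4] at t
    rw [show (cc * D) • v + (D + 2) • y2 + (D + 4) • y4
        = cc • D • v + (D + 2) • y2 + (D + 4) • y4 from by module]
    exact t
  have e2 : (cc * D * D) • v + ((D + 2) * (D + 2)) • y2 + ((D + 4) * (D + 4)) • y4 = 0 := by
    have t := congrArg (fun x => ⁅hm, x⁆) e1
    simp only [lie_add, lie_smul, lie_zero, hev, hy2, hy4] at t
    rw [show (cc * D * D) • v + ((D + 2) * (D + 2)) • y2 + ((D + 4) * (D + 4)) • y4
        = (cc * D) • D • v + (D + 2) • (D + 2) • y2 + (D + 4) • (D + 4) • y4 from by module]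
    exact t
  have h8 : ((8 : ℂ) * cc) • v = 0 := by
    have comb : ((8 : ℂ) * cc) • v
        = ((D + 2) * (D + 4)) • (cc • v + y2 + y4)
          - (2 * D + 6) • ((cc * D) • v + (D + 2) • y2 + (D + 4) • y4)
          + ((cc * D * D) • v + ((D + 2) * (D + 2)) • y2 + ((D + 4) * (D + 4)) • y4) := by
      module
    rw [e0, e1, e2] at comb
    simpa using comb
  have hc0 : cc = 0 := by
    rcases smul_eq_zero.mp h8 with h | h
    · rcases mul_eq_zero.mp h with h' | h'
      · norm_num at h'
      · exact h' 
    · exact absurd h hv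
  rw [hcc] at hc0
  rw [hd, hj1, hj2]
  linear_combination hc0
end
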